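/- Let $C$ be an associative conformal algebra and $a \in C$ with $a \oo{0} C = C$. Let $R: C \to C$ be the map $x \mapsto \{x \oo{0} a\} = \sum_{s \geq 0} (-1)^s D^{(s)}(x \oo{s} a)$. Then $R$ is injective. More precisely, if $\{x \oo{0} a\} = 0$, then $x \oo{n} b = 0$ for all $b \in C$ and $n \geq 0$; if moreover $C$ acts faithfully on itself from the left (e.g., $C$ is simple with $C \oo{\omega} C = C$), then $x = 0$. -/

import Mathlib

open Finset

/-- The curly products `{x ⟨n⟩ y} = ∑ₛ (-1)^{n+s} (Dˢ/s!) (x ⟨n+s⟩ y)`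
(a finite sum whenever the products are local, expressed via `finsum`). -/
noncomputable def curlyFn {k : Type*} [Field k]
    {C : Type*} [AddCommGroup C] [Module k C]
    (Dop : C →ₗ[k] C) (mul : ℕ → C →ₗ[k] C →ₗ[k] C)
    (n : ℕ) (x y : C) : C :=
  ∑ᶠ s : ℕ, ((-1 : k) ^ (n + s) * ((s.factorial : k))⁻¹) • ((Dop ^ s) (mul (n + s) x y))

theorem R_injective
    {k : Type*} [Field k] [CharZero k]
    {C : Type*} [AddCommGroup C] [Module k C]
    (Dop : C →ₗ[k] C) (mul : ℕ → C →ₗ[k] C →ₗ[k] C)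
    (hloc : ∀ x y : C, ∃ N : ℕ, ∀ n ≥ N, mul n x y = 0)
    (hC2 : ∀ (n : ℕ) (x y : C),
      mul n x (Dop y) = Dop (mul n x y) + (n : k) • mul (n - 1) x y)
    (hC3 : ∀ (n : ℕ) (x y : C),
      mul n (Dop x) y = -((n : k)) • mul (n - 1) x y)
    (hassocL : ∀ (n m : ℕ) (u v w : C),
      mul m (mul n u v) w =
        ∑ s ∈ range (n + 1),
          ((-1 : k) ^ s * (n.choose s : k)) • mul (n - s) u (mul (m + s) v w))
    (hassocR : ∀ (n m : ℕ) (u v w : C),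
      mul n u (mul m v w) =
        ∑ s ∈ range (n + 1), ((n.choose s : k)) • mul (m + s) (mul (n - s) u v) w) :
    ∀ a : C, (∀ y : C, ∃ x : C, mul 0 a x = y) →
      ∀ x : C, curlyFn Dop mul 0 x a = 0 →
        (∀ (n : ℕ) (b : C), mul n x b = 0) ∧
          ((∀ z : C, (∀ (n : ℕ) (b : C), mul n z b = 0) → z = 0) → x = 0) := by
  intro a ha x hx
  -- Key: powers of Dop in the left slot
  have key : ∀ (s m : ℕ) (z w : C),
      mul m ((Dop ^ s) z) w =
        ((-1 : k) ^ s * (m.descFactorial s : k)) • mul (m - s) z w := by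
    intro s
    induction s with
    | zero => intro m z w; simp
    | succ s ih =>
      intro m z w
      have hpow : (Dop ^ (s + 1)) z = (Dop ^ s) (Dop z) := by
        rw [pow_succ]; rfl
      rw [hpow, ih, hC3, smul_smul]
      have hms : m - s - 1 = m - (s + 1) := by omega
      rw [hms]
      congr 1
      have : m.descFactorial (s + 1) = (m - s) * m.descFactorial s :=
        Nat.descFactorial_succ m s
      rw [this]
      push_cast
      ring
  have main : ∀ (m : ℕ) (w : C),
      mul m x (mul 0 a w) = mul m (curlyFn Dop mul 0 x a) w := by
    intro m w
    obtain ⟨N, hN⟩ := hloc x a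
    set M := max N (m + 1) with hM
    have hcurly : curlyFn Dop mul 0 x a =
        ∑ s ∈ range M,
          ((-1 : k) ^ (0 + s) * ((s.factorial : k))⁻¹) • ((Dop ^ s) (mul (0 + s) x a)) := by
      apply finsum_eq_finset_sum_of_support_subset
      intro s hs
      simp only [Function.mem_support] at hs
      simp only [coe_range, Set.mem_Iio]
      by_contra hcon
      push_neg at hcon
      have : mul (0 + s) x a = 0 := hN _ (by omega)
      rw [zero_add] at this
      simp [this] at hs
    -- RHS computation
    have hRHS : mul m (curlyFn Dop mul 0 x a) w =
        ∑ s ∈ range M, ((m.choose s : k)) • mul (m - s) (mul s x a) w := by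
      rw [hcurly, map_sum, LinearMap.sum_apply]
      refine Finset.sum_congr rfl fun s _ => ?_
      rw [map_smul, LinearMap.smul_apply, key, smul_smul]
      have hd : (m.descFactorial s : k) = (s.factorial : k) * (m.choose s : k) := by
        rw [← Nat.cast_mul, Nat.descFactorial_eq_factorial_mul_choose]
      have hfac : (s.factorial : k) ≠ 0 := Nat.cast_ne_zero.mpr s.factorial_ne_zero
      rw [zero_add]
      congr 1
      rw [hd]
      field_simp
      rw [← pow_mul, pow_mul']
      norm_num [mul_comm]
    -- LHS computation
    have hLHS : mul m x (mul 0 a w) =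
        ∑ s ∈ range M, ((m.choose s : k)) • mul (m - s) (mul s x a) w := by
      rw [hassocR]
      have hrefl : ∑ s ∈ range (m + 1),
            ((m.choose s : k)) • mul (0 + s) (mul (m - s) x a) w =
          ∑ s ∈ range (m + 1),
            ((m.choose s : k)) • mul (m - s) (mul s x a) w := by
        rw [← Finset.sum_range_reflect]
        refine Finset.sum_congr rfl fun j hj => ?_
        simp only [mem_range] at hj
        have h1 : m + 1 - 1 - j = m - j := by omega
        have h2 : m - (m - j) = j := by omega
        rw [h1, h2, zero_add, Nat.choose_symm (by omega : j ≤ m)]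
      rw [hrefl]
      apply Finset.sum_subset
      · intro s hs
        simp only [mem_range] at hs ⊢
        omega
      · intro s _ hs
        simp only [mem_range] at hs
        have : m.choose s = 0 := Nat.choose_eq_zero_of_lt (by omega)
        simp [this]
    rw [hLHS, hRHS]
  have part1 : ∀ (n : ℕ) (b : C), mul n x b = 0 := by
    intro n b
    obtain ⟨w, hw⟩ := ha b
    rw [← hw, main, hx]
    simp
  exact ⟨part1, fun hfaith => hfaith x part1⟩
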